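/- Let u, w ∈ S_{[a,n]}, let i, k ∈ [a, n-1], and construct u', w' ∈ S_{[a,n+1]} by inserting the value n+1 into position i+1 of the one-line notations of u and w respectively (i.e., u'(t) = u(t) for t ≤ i, u'(i+1) = n+1, u'(t) = u(t-1) for i+1 < t ≤ n+1, and similarly for w'). If i ≤ k, then u →^k w if and only if u' →^{k+1} w', and moreover fix_{(k,n]}(u,w) = fix_{(k+1,n+1]}(u',w'). If i ≥ k, then u →^k w if and only if u' →^k w', and fix_{(k,n]}(u,w) ∪ {n+1} = fix_{(k,n+1]}(u',w'). -/

import Mathlib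

/-- `w` has finitely many non-fixed points. -/
def FinSupp (w : Equiv.Perm ℤ) : Prop := {i : ℤ | w i ≠ i}.Finite

/-- Descent set of a permutation of ℤ. -/
def Des (w : Equiv.Perm ℤ) : Set ℤ := {i : ℤ | w (i + 1) < w i}

/-- Number of inversions. -/
noncomputable def permLength (w : Equiv.Perm ℤ) : ℕ :=
  {p : ℤ × ℤ | p.1 < p.2 ∧ w p.2 < w p.1}.ncard

/-- Membership in `S_{[a,n]}`: all non-fixed points lie in `[a,n]`. -/
def InS (a n : ℤ) (w : Equiv.Perm ℤ) : Prop := ∀ i : ℤ, w i ≠ i → a ≤ i ∧ i ≤ n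

/-- Cover relation of the `k`-Bruhat order. -/
def BCover (k : ℤ) (u w : Equiv.Perm ℤ) : Prop :=
  ∃ i j : ℤ, i ≤ k ∧ k < j ∧ w = u * Equiv.swap i j ∧
    permLength w = permLength u + 1

/-- The `k`-Bruhat order: reflexive-transitive closure of the cover relation. -/
def kBruhat (k : ℤ) : Equiv.Perm ℤ → Equiv.Perm ℤ → Prop :=
  Relation.ReflTransGen (BCover k)

/-- There is an increasing `k`-chain from `u` to `w`. -/
def IncTo (k : ℤ) (u w : Equiv.Perm ℤ) : Prop :=
  ∃ (m : ℕ) (us : ℕ → Equiv.Perm ℤ) (ab : ℕ → ℤ × ℤ),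
    us 0 = u ∧ us m = w ∧
    (∀ i < m, (ab i).1 ≤ k ∧ k < (ab i).2 ∧
      us (i + 1) = us i * Equiv.swap (ab i).1 (ab i).2 ∧
      permLength (us (i + 1)) = permLength (us i) + 1) ∧
    (∀ i j : ℕ, i < j → j < m → us i (ab i).1 < us j (ab j).1)

/-- `fix_{(lo,hi]}(u,w) = {u(t) : lo < t ≤ hi, u(t) = w(t)}`. -/
def fixSet (lo hi : ℤ) (u w : Equiv.Perm ℤ) : Set ℤ :=
  {m : ℤ | ∃ t : ℤ, lo < t ∧ t ≤ hi ∧ u t = m ∧ w t = m}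

namespace St10

def Inv (v : Equiv.Perm ℤ) : Set (ℤ × ℤ) := {p | p.1 < p.2 ∧ v p.2 < v p.1}

lemma permLength_eq (v : Equiv.Perm ℤ) : permLength v = (Inv v).ncard := rfl

lemma maps_Icc {v : Equiv.Perm ℤ} {lo hi : ℤ}
    (h : ∀ x : ℤ, x < lo ∨ hi < x → v x = x) :
    ∀ x : ℤ, lo ≤ x → x ≤ hi → lo ≤ v x ∧ v x ≤ hi := by
  intro x h1 h2
  by_contra hc
  have hfix : v (v x) = v x := h (v x) (by omega)
  have := v.injective hfix
  omega

lemma inv_subset {v : Equiv.Perm ℤ} {lo hi : ℤ}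
    (h : ∀ x : ℤ, x < lo ∨ hi < x → v x = x) :
    Inv v ⊆ Set.Icc lo hi ×ˢ Set.Icc lo hi := by
  rintro ⟨s, t⟩ ⟨hst, hv⟩
  simp only [Inv, Set.mem_setOf_eq] at hst hv ⊢
  have hthi : t ≤ hi := by
    by_contra hth
    have hvt : v t = t := h t (by omega)
    rcases lt_or_ge s lo with hs | hs
    · have := h s (Or.inl hs); omega
    · rcases le_or_gt s hi with hs2 | hs2
      · have := maps_Icc h s hs hs2; omega
      · have := h s (Or.inr hs2); omega
  have hslo : lo ≤ s := by
    by_contra hsl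
    have hvs : v s = s := h s (by omega)
    rcases lt_or_ge t lo with ht | ht
    · have := h t (Or.inl ht); omega
    · have := maps_Icc h t ht hthi; omega
  exact ⟨⟨hslo, by omega⟩, ⟨by omega, hthi⟩⟩

lemma fixes_of_finsupp {v : Equiv.Perm ℤ} (hv : FinSupp v) :
    ∃ lo hi : ℤ, ∀ x : ℤ, x < lo ∨ hi < x → v x = x := by
  obtain ⟨hi, hhi⟩ := hv.bddAbove
  obtain ⟨lo, hlo⟩ := hv.bddBelow
  refine ⟨lo, hi, fun x hx => ?_⟩
  by_contra hne
  have h1 := hhi (a := x) hne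
  have h2 := hlo (a := x) hne
  omega

lemma inv_finite {v : Equiv.Perm ℤ} (hv : FinSupp v) : (Inv v).Finite := by
  obtain ⟨lo, hi, h⟩ := fixes_of_finsupp hv
  exact ((Set.finite_Icc lo hi).prod (Set.finite_Icc lo hi)).subset (inv_subset h)

lemma finsupp_of_InS {a N : ℤ} {v : Equiv.Perm ℤ} (h : InS a N v) : FinSupp v :=
  (Set.finite_Icc a N).subset (fun x hx => Set.mem_Icc.2 (h x hx))

lemma finsupp_mul_swap {v : Equiv.Perm ℤ} (hv : FinSupp v) (p q : ℤ) :
    FinSupp (v * Equiv.swap p q) := by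
  have : {x : ℤ | (v * Equiv.swap p q) x ≠ x} ⊆ {x : ℤ | v x ≠ x} ∪ {p, q} := by
    intro x hx
    by_cases h1 : x = p
    · exact Or.inr (Or.inl h1)
    by_cases h2 : x = q
    · exact Or.inr (Or.inr h2)
    left
    simpa [Equiv.Perm.mul_apply, Equiv.swap_apply_of_ne_of_ne h1 h2] using hx
  exact ((hv.union (Set.toFinite _))).subset this

/-- Key: length strictly increases when multiplying by a swap with increasing values. -/
lemma len_lt {v : Equiv.Perm ℤ} (hv : FinSupp v) {p q : ℤ}
    (hpq : p < q) (hval : v p < v q) :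
    permLength v < permLength (v * Equiv.swap p q) := by
  set τ := Equiv.swap p q with hτ
  have hfin : (Inv v).Finite := inv_finite hv
  have hfin' : (Inv (v * τ)).Finite := inv_finite (finsupp_mul_swap hv p q)
  have hmem : (p, q) ∈ Inv (v * τ) := by
    refine ⟨hpq, ?_⟩
    simp [hτ, Equiv.Perm.mul_apply, Equiv.swap_apply_left, Equiv.swap_apply_right]
    exact hval
  set f : ℤ × ℤ → ℤ × ℤ := fun s =>
    if s.1 = q ∧ v p ≤ v s.2 then (p, s.2)
    else if s.2 = p ∧ v s.1 ≤ v q then (s.1, q)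
    else s with hf
  have hne : p ≠ q := ne_of_lt hpq
  have happ : ∀ x : ℤ, (v * τ) x = v (τ x) := fun x => rfl
  have hτp : τ p = q := Equiv.swap_apply_left p q
  have hτq : τ q = p := Equiv.swap_apply_right p q
  have hτo : ∀ x : ℤ, x ≠ p → x ≠ q → τ x = x := fun x h1 h2 =>
    Equiv.swap_apply_of_ne_of_ne h1 h2
  have hinj : ∀ x y : ℤ, v x = v y ↔ x = y := fun x y => v.injective.eq_iff
  have hmapsTo : ∀ s ∈ Inv v, f s ∈ Inv (v * τ) \ {(p, q)} := by
    rintro ⟨s, t⟩ ⟨hst, hvts⟩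
    simp only [Inv, Set.mem_setOf_eq] at hst hvts
    by_cases c1 : s = q ∧ v p ≤ v t
    · have h1' := c1.1
      have hc := c1.2
      rw [h1'] at hst hvts
      have htp : t ≠ p := by omega
      have htq : t ≠ q := by omega
      rw [hf]
      simp only [if_pos c1]
      refine ⟨⟨by omega, ?_⟩, ?_⟩
      · simp only [Equiv.Perm.mul_apply]
        rw [hτp, hτo t htp htq]
        omega
      · intro hmem'
        rw [Set.mem_singleton_iff, Prod.mk.injEq] at hmem'
        omega
    · by_cases c2 : t = p ∧ v s ≤ v q
      · have h1' := c2.1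
        have hc := c2.2
        rw [h1'] at hst hvts
        have hsp : s ≠ p := by omega
        have hsq : s ≠ q := by omega
        have hvne : v s ≠ v q := fun h => hsq (v.injective h)
        rw [hf]
        simp only [if_neg c1, if_pos c2]
        refine ⟨⟨by omega, ?_⟩, ?_⟩
        · simp only [Equiv.Perm.mul_apply]
          rw [hτq, hτo s hsp hsq]
          omega
        · intro hmem'
          rw [Set.mem_singleton_iff, Prod.mk.injEq] at hmem'
          omega
      · rw [hf]
        simp only [if_neg c1, if_neg c2]
        have hnepq : ¬ (s = p ∧ t = q) := by
          rintro ⟨rfl, rfl⟩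
          omega
        refine ⟨⟨hst, ?_⟩, ?_⟩
        swap
        · intro hmem'
          rw [Set.mem_singleton_iff, Prod.mk.injEq] at hmem'
          exact hnepq hmem'
        push_neg at c1 c2
        simp only [Equiv.Perm.mul_apply]
        by_cases hsp : s = p
        · have htq : t ≠ q := fun h => hnepq ⟨hsp, h⟩
          have htp : t ≠ p := by omega
          rw [hsp, hτp, hτo t htp htq]
          rw [hsp] at hvts
          have hc1 := c2
          omega
        · by_cases hsq : s = q
          · have hc1 := c1 hsq
            have htp : t ≠ p := by omega
            have htq : t ≠ q := by omega
            rw [hsq, hτq, hτo t htp htq]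
            rw [hsq] at hvts
            omega
          · rw [hτo s hsp hsq]
            by_cases htp : t = p
            · have hc2 := c2 htp
              rw [htp, hτp]
              rw [htp] at hvts
              omega
            · by_cases htq : t = q
              · rw [htq, hτq]
                rw [htq] at hvts
                omega
              · rw [hτo t htp htq]
                omega
  have hinjOn : Set.InjOn f (Inv v) := by
    rintro ⟨s, t⟩ hst' ⟨s', t'⟩ hst'' heq
    obtain ⟨hst, hvts⟩ := hst'
    obtain ⟨hst2, hvts2⟩ := hst''
    simp only [Inv, Set.mem_setOf_eq] at hst hvts hst2 hvts2
    rw [hf] at heq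
    simp only at heq
    by_cases c1 : s = q ∧ v p ≤ v t <;> by_cases c1' : s' = q ∧ v p ≤ v t'
    · rw [if_pos c1, if_pos c1'] at heq
      simp only [Prod.mk.injEq] at heq
      exact Prod.ext (by rw [c1.1, c1'.1]) heq.2
    · rw [if_pos c1] at heq
      by_cases c2' : t' = p ∧ v s' ≤ v q
      · rw [if_neg c1', if_pos c2'] at heq
        simp only [Prod.mk.injEq] at heq
        omega
      · rw [if_neg c1', if_neg c2'] at heq
        simp only [Prod.mk.injEq] at heq
        obtain ⟨h1, h2⟩ := heq
        obtain ⟨_, hc⟩ := c1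
        rw [← h1] at hvts2
        rw [h2] at hc
        omega
    · rw [if_pos c1'] at heq
      by_cases c2 : t = p ∧ v s ≤ v q
      · rw [if_neg c1, if_pos c2] at heq
        simp only [Prod.mk.injEq] at heq
        omega
      · rw [if_neg c1, if_neg c2] at heq
        simp only [Prod.mk.injEq] at heq
        obtain ⟨h1, h2⟩ := heq
        obtain ⟨_, hc⟩ := c1'
        rw [h1] at hvts
        rw [← h2] at hc
        omega
    · by_cases c2 : t = p ∧ v s ≤ v q <;> by_cases c2' : t' = p ∧ v s' ≤ v q
      · rw [if_neg c1, if_pos c2, if_neg c1', if_pos c2'] at heq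
        simp only [Prod.mk.injEq] at heq
        exact Prod.ext heq.1 (by rw [c2.1, c2'.1])
      · rw [if_neg c1, if_pos c2, if_neg c1', if_neg c2'] at heq
        simp only [Prod.mk.injEq] at heq
        obtain ⟨h1, h2⟩ := heq
        obtain ⟨_, hc⟩ := c2
        rw [← h2] at hvts2
        rw [h1] at hc
        omega
      · rw [if_neg c1, if_neg c2, if_neg c1', if_pos c2'] at heq
        simp only [Prod.mk.injEq] at heq
        obtain ⟨h1, h2⟩ := heq
        obtain ⟨_, hc⟩ := c2'
        rw [h2] at hvts
        rw [← h1] at hc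
        omega
      · rw [if_neg c1, if_neg c2, if_neg c1', if_neg c2'] at heq
        exact heq
  have h1 : permLength v ≤ (Inv (v * τ) \ {(p, q)}).ncard :=
    Set.ncard_le_ncard_of_injOn f hmapsTo hinjOn hfin'.diff
  have h2 : (Inv (v * τ) \ {(p, q)}).ncard < (Inv (v * τ)).ncard :=
    Set.ncard_diff_singleton_lt_of_mem hmem hfin'
  exact lt_of_le_of_lt h1 h2

lemma cover_lt {v : Equiv.Perm ℤ} (hv : FinSupp v) {p q : ℤ} (hpq : p < q)
    (hl : permLength (v * Equiv.swap p q) = permLength v + 1) : v p < v q := by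
  rcases lt_trichotomy (v p) (v q) with h | h | h
  · exact h
  · exact absurd (v.injective h) (ne_of_lt hpq)
  · exfalso
    have hv' : FinSupp (v * Equiv.swap p q) := finsupp_mul_swap hv p q
    have h2 : (v * Equiv.swap p q) p < (v * Equiv.swap p q) q := by
      simp only [Equiv.Perm.mul_apply, Equiv.swap_apply_left, Equiv.swap_apply_right]
      exact h
    have h3 := len_lt hv' hpq h2
    rw [show v * Equiv.swap p q * Equiv.swap p q = v by
      rw [mul_assoc, Equiv.swap_mul_self, mul_one]] at h3
    omega

section Chain

variable {a N k : ℤ} {m : ℕ} {us : ℕ → Equiv.Perm ℤ} {ab : ℕ → ℤ × ℤ}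

/-- Chain-support lemma: every member of an increasing chain between two
elements of `S_{[a,N]}` lies in `S_{[a,N]}`, and all swap positions lie in `[a,N]`. -/
lemma chainS (hak : a ≤ k) (hkN : k ≤ N - 1)
    (h0 : InS a N (us 0)) (hm : InS a N (us m))
    (hstep : ∀ j < m, (ab j).1 ≤ k ∧ k < (ab j).2 ∧
      us (j + 1) = us j * Equiv.swap (ab j).1 (ab j).2 ∧
      permLength (us (j + 1)) = permLength (us j) + 1) :
    (∀ j ≤ m, InS a N (us j)) ∧ (∀ j < m, a ≤ (ab j).1 ∧ (ab j).2 ≤ N) := by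
  have hfs : ∀ j ≤ m, FinSupp (us j) := by
    intro j
    induction j with
    | zero => exact fun _ => finsupp_of_InS h0
    | succ j ih =>
      intro hj
      rw [(hstep j (by omega)).2.2.1]
      exact finsupp_mul_swap (ih (by omega)) _ _
  have hval : ∀ j < m, us j (ab j).1 < us j (ab j).2 := by
    intro j hj
    obtain ⟨h1, h2, h3, h4⟩ := hstep j hj
    exact cover_lt (hfs j hj.le) (by omega) (h3 ▸ h4)
  have hstepval : ∀ j < m, ∀ t : ℤ, t ≠ (ab j).1 → t ≠ (ab j).2 →
      us (j + 1) t = us j t := by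
    intro j hj t h1 h2
    rw [(hstep j hj).2.2.1]
    simp only [Equiv.Perm.mul_apply, Equiv.swap_apply_of_ne_of_ne h1 h2]
  have hstep1 : ∀ j < m, us (j + 1) (ab j).1 = us j (ab j).2 := by
    intro j hj
    rw [(hstep j hj).2.2.1]
    simp only [Equiv.Perm.mul_apply, Equiv.swap_apply_left]
  have hstep2 : ∀ j < m, us (j + 1) (ab j).2 = us j (ab j).1 := by
    intro j hj
    rw [(hstep j hj).2.2.1]
    simp only [Equiv.Perm.mul_apply, Equiv.swap_apply_right]
  have hmlow : ∀ t : ℤ, t ≤ k → ∀ d j : ℕ, j + d ≤ m → us j t ≤ us (j + d) t := by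
    intro t ht d
    induction d with
    | zero => intro j _; simp
    | succ d ih =>
      intro j hjd
      have h1 : us j t ≤ us (j + d) t := ih j (by omega)
      have hj : j + d < m := by omega
      have hrw : j + (d + 1) = (j + d) + 1 := by omega
      rw [hrw]
      by_cases hq : t = (ab (j + d)).1
      · have h2 := hstep1 (j + d) hj
        have h3 := hval (j + d) hj
        rw [hq] at h1 ⊢
        omega
      · have ht2 : t ≠ (ab (j + d)).2 := by
          have := (hstep (j + d) hj).2.1
          omega
        rw [hstepval (j + d) hj t hq ht2]
        omega
  have hmhigh : ∀ t : ℤ, k < t → ∀ d j : ℕ, j + d ≤ m → us (j + d) t ≤ us j t := by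
    intro t ht d
    induction d with
    | zero => intro j _; simp
    | succ d ih =>
      intro j hjd
      have h1 : us (j + d) t ≤ us j t := ih j (by omega)
      have hj : j + d < m := by omega
      have hrw : j + (d + 1) = (j + d) + 1 := by omega
      rw [hrw]
      by_cases hq : t = (ab (j + d)).2
      · have h2 := hstep2 (j + d) hj
        have h3 := hval (j + d) hj
        rw [hq] at h1 ⊢
        omega
      · have ht1 : t ≠ (ab (j + d)).1 := by
          have := (hstep (j + d) hj).1
          omega
        rw [hstepval (j + d) hj t ht1 hq]
        omega
  have hlowfix : ∀ t : ℤ, t < a → ∀ j ≤ m, us j t = t := by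
    intro t ht j hj
    have e0 : us 0 t = t := by
      by_contra h
      have := h0 t h
      omega
    have em : us m t = t := by
      by_contra h
      have := hm t h
      omega
    have h1 : us 0 t ≤ us (0 + j) t := hmlow t (by omega) j 0 (by omega)
    have h2 : us j t ≤ us (j + (m - j)) t := hmlow t (by omega) (m - j) j (by omega)
    have hj1 : 0 + j = j := by omega
    have hj2 : j + (m - j) = m := by omega
    rw [hj1] at h1
    rw [hj2] at h2
    omega
  have hhighfix : ∀ t : ℤ, N < t → ∀ j ≤ m, us j t = t := by
    intro t ht j hj
    have e0 : us 0 t = t := by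
      by_contra h
      have := h0 t h
      omega
    have em : us m t = t := by
      by_contra h
      have := hm t h
      omega
    have h1 : us (0 + j) t ≤ us 0 t := hmhigh t (by omega) j 0 (by omega)
    have h2 : us (j + (m - j)) t ≤ us j t := hmhigh t (by omega) (m - j) j (by omega)
    have hj1 : 0 + j = j := by omega
    have hj2 : j + (m - j) = m := by omega
    rw [hj1] at h1
    rw [hj2] at h2
    omega
  constructor
  · intro j hj t hne
    constructor
    · by_contra h
      exact hne (hlowfix t (by omega) j hj)
    · by_contra h
      exact hne (hhighfix t (by omega) j hj)
  · intro j hj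
    obtain ⟨hp, hq, _, _⟩ := hstep j hj
    constructor
    · by_contra h
      push_neg at h
      have e1 : us j (ab j).1 = (ab j).1 := hlowfix _ (by omega) j (by omega)
      have e2 : us (j + 1) (ab j).1 = (ab j).1 := hlowfix _ (by omega) (j + 1) (by omega)
      have e3 := hstep1 j hj
      have e4 := hval j hj
      omega
    · by_contra h
      push_neg at h
      have e1 : us j (ab j).2 = (ab j).2 := hhighfix _ (by omega) j (by omega)
      have e2 : us (j + 1) (ab j).2 = (ab j).2 := hhighfix _ (by omega) (j + 1) (by omega)
      have e3 := hstep2 j hj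
      have e4 := hval j hj
      omega

end Chain

section Eperm

/-- The cycle `n+1 → n → ⋯ → i+1 → n+1` (as a function: shifts `[i+2,n+1]` down
by one and sends `i+1` to `n+1`); the identity if `n < i`. -/
def eperm (i n : ℤ) : Equiv.Perm ℤ where
  toFun x := if i + 2 ≤ x ∧ x ≤ n + 1 then x - 1 else if x = i + 1 ∧ i ≤ n then n + 1 else x
  invFun x := if i + 1 ≤ x ∧ x ≤ n then x + 1 else if x = n + 1 ∧ i ≤ n then i + 1 else x
  left_inv := by
    intro x
    by_cases h1 : i + 2 ≤ x ∧ x ≤ n + 1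
    · simp only [if_pos h1]
      split_ifs <;> omega
    · simp only [if_neg h1]
      split_ifs <;> omega
  right_inv := by
    intro x
    by_cases h1 : i + 1 ≤ x ∧ x ≤ n
    · simp only [if_pos h1]
      split_ifs <;> omega
    · simp only [if_neg h1]
      split_ifs <;> omega

variable {i n : ℤ}

lemma eperm_apply (x : ℤ) : eperm i n x =
    if i + 2 ≤ x ∧ x ≤ n + 1 then x - 1 else if x = i + 1 ∧ i ≤ n then n + 1 else x := rfl

lemma eperm_symm_apply (x : ℤ) : (eperm i n).symm x =
    if i + 1 ≤ x ∧ x ≤ n then x + 1 else if x = n + 1 ∧ i ≤ n then i + 1 else x := rfl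

lemma eperm_low {x : ℤ} (h : x ≤ i) : eperm i n x = x := by
  rw [eperm_apply]; split_ifs <;> omega

lemma eperm_mid {x : ℤ} (h1 : i + 2 ≤ x) (h2 : x ≤ n + 1) : eperm i n x = x - 1 := by
  rw [eperm_apply]; split_ifs <;> omega

lemma eperm_i1 (h : i ≤ n) : eperm i n (i + 1) = n + 1 := by
  rw [eperm_apply]; split_ifs <;> omega

lemma eperm_high {x : ℤ} (h : n + 1 < x) : eperm i n x = x := by
  rw [eperm_apply]; split_ifs <;> omega

lemma eperm_symm_low {x : ℤ} (h : x ≤ i) : (eperm i n).symm x = x := by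
  rw [eperm_symm_apply]; split_ifs <;> omega

lemma eperm_symm_mid {x : ℤ} (h1 : i + 1 ≤ x) (h2 : x ≤ n) : (eperm i n).symm x = x + 1 := by
  rw [eperm_symm_apply]; split_ifs <;> omega

lemma eperm_symm_n1 (h : i ≤ n) : (eperm i n).symm (n + 1) = i + 1 := by
  rw [eperm_symm_apply]; split_ifs <;> omega

lemma eperm_symm_high {x : ℤ} (h : n + 1 < x) : (eperm i n).symm x = x := by
  rw [eperm_symm_apply]; split_ifs <;> omega

lemma eperm_mono {x y : ℤ} (hx : x ≤ n + 1) (hx1 : x ≠ i + 1)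
    (hy : y ≤ n + 1) (hy1 : y ≠ i + 1) (hxy : x < y) : eperm i n x < eperm i n y := by
  rcases le_or_gt x i with h1 | h1 <;> rcases le_or_gt y i with h2 | h2
  · rw [eperm_low h1, eperm_low h2]; exact hxy
  · rw [eperm_low h1, eperm_mid (by omega) hy]; omega
  · omega
  · rw [eperm_mid (by omega) hx, eperm_mid (by omega) hy]; omega

lemma eperm_le_n {x : ℤ} (hin : i ≤ n) (hx : x ≤ n + 1) (hx1 : x ≠ i + 1) : eperm i n x ≤ n := by
  rcases le_or_gt x i with h1 | h1
  · rw [eperm_low h1]; omega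
  · rw [eperm_mid (by omega) hx]; omega

lemma eperm_symm_mono {x y : ℤ} (hx : x ≤ n) (hy : y ≤ n) (hxy : x < y) :
    (eperm i n).symm x < (eperm i n).symm y := by
  rcases le_or_gt x i with h1 | h1 <;> rcases le_or_gt y i with h2 | h2
  · rw [eperm_symm_low h1, eperm_symm_low h2]; exact hxy
  · rw [eperm_symm_low h1, eperm_symm_mid (by omega) hy]; omega
  · omega
  · rw [eperm_symm_mid (by omega) hx, eperm_symm_mid (by omega) hy]; omega

lemma eperm_symm_ne_i1 {a₀ x : ℤ} (hx1 : a₀ ≤ x) (hx : x ≤ n) (h : a₀ ≤ i + 1) :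
    (eperm i n).symm x ≠ i + 1 := by
  rcases le_or_gt x i with h1 | h1
  · rw [eperm_symm_low h1]; omega
  · rw [eperm_symm_mid (by omega) hx]; omega

end Eperm

section LenE

variable {a n i : ℤ}

lemma InS_fixes {v : Equiv.Perm ℤ} (hv : InS a n v) :
    ∀ x : ℤ, x < a ∨ n < x → v x = x := by
  intro x hx
  by_contra h
  have := hv x h
  omega

/-- `v ↦ v * eperm` sends `S_{[a,n]}` into `S_{[a,n+1]}`. -/
lemma InS_mul_eperm {v : Equiv.Perm ℤ} (hv : InS a n v) (hai : a ≤ i) (hin : i ≤ n - 1) :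
    InS a (n + 1) (v * eperm i n) := by
  intro x hx
  by_contra hc
  push_neg at hc
  apply hx
  simp only [Equiv.Perm.mul_apply]
  rcases lt_or_ge x a with h1 | h1
  · rw [eperm_low (by omega), InS_fixes hv x (by omega)]
  · have h2 : n + 1 < x := hc h1
    rw [eperm_high h2, InS_fixes hv x (by omega)]

/-- Key length formula: multiplying by `eperm` adds exactly `n - i` inversions. -/
lemma len_mul_eperm {v : Equiv.Perm ℤ} (hv : InS a n v) (hai : a ≤ i) (hin : i ≤ n - 1) :
    permLength (v * eperm i n) = permLength v + (n - i).toNat := by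
  have hfix := InS_fixes hv
  have hmap := maps_Icc (lo := a) (hi := n) hfix
  have hsub : Inv v ⊆ Set.Icc a n ×ˢ Set.Icc a n := inv_subset hfix
  have hve : InS a (n + 1) (v * eperm i n) := InS_mul_eperm hv hai hin
  have hsub' : Inv (v * eperm i n) ⊆ Set.Icc a (n + 1) ×ˢ Set.Icc a (n + 1) :=
    inv_subset (InS_fixes hve)
  have hvn1 : v (n + 1) = n + 1 := hfix (n + 1) (by omega)
  have hval_le : ∀ x : ℤ, x ≤ n + 1 → x ≠ i + 1 → v (eperm i n x) ≤ n := by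
    intro x hx hx1
    have h1 : eperm i n x ≤ n := eperm_le_n (by omega) hx hx1
    rcases lt_or_ge (eperm i n x) a with h2 | h2
    · rw [hfix (eperm i n x) (by omega)]; omega
    · exact (hmap (eperm i n x) h2 h1).2
  have hkey : Inv (v * eperm i n) =
      (fun s : ℤ × ℤ => ((eperm i n).symm s.1, (eperm i n).symm s.2)) '' Inv v ∪
      (fun t : ℤ => (i + 1, t)) '' Set.Ioc (i + 1) (n + 1) := by
    ext ⟨x, y⟩
    simp only [Inv, Set.mem_setOf_eq, Set.mem_union, Set.mem_image, Set.mem_Ioc,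
      Prod.exists, Prod.mk.injEq, Equiv.Perm.mul_apply]
    constructor
    · rintro ⟨hxy, hvyx⟩
      have hb := hsub' (show (x, y) ∈ Inv (v * eperm i n) from ⟨hxy, hvyx⟩)
      simp only [Set.mem_prod, Set.mem_Icc] at hb
      by_cases hx1 : x = i + 1
      · exact Or.inr ⟨y, ⟨by omega, by omega⟩, hx1.symm, rfl⟩
      · have hy1 : y ≠ i + 1 := by
          intro h
          rw [h, eperm_i1 (by omega), hvn1] at hvyx
          have := hval_le x (by omega) hx1
          omega
        exact Or.inl ⟨eperm i n x, eperm i n y,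
          ⟨eperm_mono (by omega) hx1 (by omega) hy1 hxy, hvyx⟩,
          Equiv.symm_apply_apply _ _, Equiv.symm_apply_apply _ _⟩
    · rintro (⟨s, t, ⟨hst, hvts⟩, hx, hy⟩ | ⟨t, ⟨ht1, ht2⟩, hx, hy⟩)
      · have hb := hsub (show (s, t) ∈ Inv v from ⟨hst, hvts⟩)
        simp only [Set.mem_prod, Set.mem_Icc] at hb
        refine ⟨?_, ?_⟩
        · rw [← hx, ← hy]
          exact eperm_symm_mono (by omega) (by omega) hst
        · rw [← hx, ← hy, Equiv.apply_symm_apply, Equiv.apply_symm_apply]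
          exact hvts
      · refine ⟨by omega, ?_⟩
        rw [← hx, ← hy, eperm_i1 (by omega), hvn1]
        have := hval_le t (by omega) (by omega)
        omega
  have hfin1 : (Inv v).Finite := inv_finite (finsupp_of_InS hv)
  have hinj1 : Function.Injective
      (fun s : ℤ × ℤ => ((eperm i n).symm s.1, (eperm i n).symm s.2)) := by
    intro s t h
    simp only [Prod.mk.injEq] at h
    exact Prod.ext ((eperm i n).symm.injective h.1) ((eperm i n).symm.injective h.2)
  have hinj2 : Function.Injective (fun t : ℤ => ((i : ℤ) + 1, t)) := by
    intro s t h
    simpa using h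
  have hdisj : Disjoint
      ((fun s : ℤ × ℤ => ((eperm i n).symm s.1, (eperm i n).symm s.2)) '' Inv v)
      ((fun t : ℤ => (i + 1, t)) '' Set.Ioc (i + 1) (n + 1)) := by
    rw [Set.disjoint_left]
    rintro ⟨x, y⟩ ⟨⟨s, t⟩, hmem, heq⟩ ⟨t', _, heq'⟩
    simp only [Prod.mk.injEq] at heq heq'
    have hb := hsub hmem
    simp only [Set.mem_prod, Set.mem_Icc] at hb
    have hne : (eperm i n).symm s ≠ i + 1 :=
      eperm_symm_ne_i1 (a₀ := a) hb.1.1 hb.1.2 (by omega)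
    rw [heq.1] at hne
    exact hne heq'.1.symm
  rw [permLength_eq, permLength_eq, hkey,
    Set.ncard_union_eq hdisj (hfin1.image _) ((Set.finite_Ioc _ _).image _),
    Set.ncard_image_of_injective _ hinj1, Set.ncard_image_of_injective _ hinj2,
    ← Finset.coe_Ioc, Set.ncard_coe_finset, Int.card_Ioc]
  omega

end LenE


section Transfer

variable {a n i k k' : ℤ}

lemma swap_eperm (i n p q : ℤ) :
    Equiv.swap p q * eperm i n =
      eperm i n * Equiv.swap ((eperm i n).symm p) ((eperm i n).symm q) := by
  have h := Equiv.swap_apply_apply (eperm i n)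
      ((eperm i n).symm p) ((eperm i n).symm q)
  rw [Equiv.apply_symm_apply, Equiv.apply_symm_apply] at h
  rw [h]
  group

lemma incto_fwd (hai : a ≤ i) (hin : i ≤ n - 1) (hak : a ≤ k) (hkn : k ≤ n - 1)
    (hcase : (i ≤ k ∧ k' = k + 1) ∨ (k ≤ i ∧ k' = k))
    {u w : Equiv.Perm ℤ} (hu : InS a n u) (hw : InS a n w)
    (h : IncTo k u w) : IncTo k' (u * eperm i n) (w * eperm i n) := by
  obtain ⟨m, us, ab, h0, hm, hstep, hinc⟩ := h
  obtain ⟨hSj, hbound⟩ := chainS hak hkn (h0 ▸ hu) (hm ▸ hw) hstep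
  refine ⟨m, fun j => us j * eperm i n,
    fun j => ((eperm i n).symm (ab j).1, (eperm i n).symm (ab j).2),
    by show us 0 * eperm i n = u * eperm i n; rw [h0],
    by show us m * eperm i n = w * eperm i n; rw [hm], ?_, ?_⟩
  · intro j hj
    dsimp only
    obtain ⟨hp, hq, heq, hlen⟩ := hstep j hj
    obtain ⟨hpa, hqN⟩ := hbound j hj
    refine ⟨?_, ?_, ?_, ?_⟩
    · rcases hcase with ⟨hik, rfl⟩ | ⟨hki, rfl⟩
      · rcases le_or_gt (ab j).1 i with h1 | h1
        · rw [eperm_symm_low h1]; omega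
        · rw [eperm_symm_mid (by omega) (by omega)]; omega
      · rw [eperm_symm_low (by omega)]; omega
    · rcases hcase with ⟨hik, rfl⟩ | ⟨hki, rfl⟩
      · rw [eperm_symm_mid (by omega) (by omega)]; omega
      · rcases le_or_gt (ab j).2 i with h1 | h1
        · rw [eperm_symm_low h1]; omega
        · rw [eperm_symm_mid (by omega) (by omega)]; omega
    · rw [heq, mul_assoc, swap_eperm, ← mul_assoc]
    · rw [len_mul_eperm (hSj (j + 1) (by omega)) hai hin,
        len_mul_eperm (hSj j (by omega)) hai hin, hlen]
      omega
  · intro j j' hjj' hj'm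
    dsimp only
    have h2 := hinc j j' hjj' hj'm
    simpa only [Equiv.Perm.mul_apply, Equiv.apply_symm_apply] using h2

lemma incto_bwd (hai : a ≤ i) (hin : i ≤ n - 1) (hak : a ≤ k) (hkn : k ≤ n - 1)
    (hcase : (i ≤ k ∧ k' = k + 1) ∨ (k ≤ i ∧ k' = k))
    {u w : Equiv.Perm ℤ} (hu : InS a n u) (hw : InS a n w)
    (h : IncTo k' (u * eperm i n) (w * eperm i n)) : IncTo k u w := by
  have hak' : a ≤ k' := by rcases hcase with ⟨h1, rfl⟩ | ⟨h1, rfl⟩ <;> omega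
  have hk'n : k' ≤ (n + 1) - 1 := by rcases hcase with ⟨h1, rfl⟩ | ⟨h1, rfl⟩ <;> omega
  obtain ⟨m, vs, ab, h0, hm, hstep, hinc⟩ := h
  have hue : InS a (n + 1) (u * eperm i n) := InS_mul_eperm hu hai hin
  have hwe : InS a (n + 1) (w * eperm i n) := InS_mul_eperm hw hai hin
  obtain ⟨hSj, hbound⟩ := chainS hak' hk'n (h0 ▸ hue) (hm ▸ hwe) hstep
  have hvalbd : ∀ j ≤ m, ∀ x : ℤ, vs j x ≤ max x (n + 1) := by
    intro j hj x
    rcases lt_or_ge x a with h1 | h1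
    · rw [InS_fixes (hSj j hj) x (by omega)]; omega
    · rcases le_or_gt x (n + 1) with h2 | h2
      · have := (maps_Icc (InS_fixes (hSj j hj)) x h1 h2).2; omega
      · rw [InS_fixes (hSj j hj) x (by omega)]; omega
  have hcov : ∀ j < m, vs j (ab j).1 < vs j (ab j).2 := by
    intro j hj
    obtain ⟨hp, hq, heq, hlen⟩ := hstep j hj
    have hfs : FinSupp (vs j) := finsupp_of_InS (hSj j (by omega))
    exact cover_lt hfs (by omega) (heq ▸ hlen)
  -- the maximal value n+1 can never move once at a position ≤ k'
  have hstuck : ∀ p : ℤ, p ≤ k' → ∀ d j : ℕ, j + d ≤ m → vs j p = n + 1 →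
      vs (j + d) p = n + 1 := by
    intro p hp d
    induction d with
    | zero => intro j _ h1; exact h1
    | succ d ih =>
      intro j hjd h1
      have hj : j + d < m := by omega
      have hrw : j + (d + 1) = (j + d) + 1 := by omega
      have h2 : vs (j + d) p = n + 1 := ih j (by omega) h1
      rw [hrw, (hstep (j + d) hj).2.2.1]
      by_cases he1 : p = (ab (j + d)).1
      · exfalso
        have h3 := hcov (j + d) hj
        have h4 := hvalbd (j + d) (by omega) (ab (j + d)).2
        have h5 := (hbound (j + d) hj).2
        rw [← he1, h2] at h3
        omega
      · have he2 : p ≠ (ab (j + d)).2 := by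
          have := (hstep (j + d) hj).2.1
          omega
        simp only [Equiv.Perm.mul_apply, Equiv.swap_apply_of_ne_of_ne he1 he2]
        exact h2
  -- position i+1 always carries the value n+1
  have hfix1 : ∀ j ≤ m, vs j (i + 1) = n + 1 := by
    intro j
    induction j with
    | zero =>
      intro _
      rw [h0]
      simp only [Equiv.Perm.mul_apply]
      rw [eperm_i1 (by omega), InS_fixes hu (n + 1) (by omega)]
    | succ j ih =>
      intro hj
      have hj' : j < m := by omega
      have h2 : vs j (i + 1) = n + 1 := ih (by omega)
      rw [(hstep j hj').2.2.1]
      by_cases he1 : (i + 1 : ℤ) = (ab j).1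
      · exfalso
        have h3 := hcov j hj'
        have h4 := hvalbd j (by omega) (ab j).2
        have h5 := (hbound j hj').2
        rw [← he1, h2] at h3
        omega
      · by_cases he2 : (i + 1 : ℤ) = (ab j).2
        · exfalso
          have h3 : vs (j + 1) (ab j).1 = n + 1 := by
            rw [(hstep j hj').2.2.1]
            simp only [Equiv.Perm.mul_apply, Equiv.swap_apply_left]
            rw [← he2, h2]
          have h4 : vs (j + 1 + (m - (j + 1))) (ab j).1 = n + 1 :=
            hstuck (ab j).1 (hstep j hj').1 _ (j + 1) (by omega) h3
          have hrw : j + 1 + (m - (j + 1)) = m := by omega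
          rw [hrw] at h4
          have h5 : vs m (i + 1) = n + 1 := by
            rw [hm]
            simp only [Equiv.Perm.mul_apply]
            rw [eperm_i1 (by omega), InS_fixes hw (n + 1) (by omega)]
          rw [hm] at h4 h5
          have h6 := (w * eperm i n).injective (h4.trans h5.symm)
          have h7 := (hstep j hj').1
          have h8 := (hstep j hj').2.1
          omega
        · simp only [Equiv.Perm.mul_apply, Equiv.swap_apply_of_ne_of_ne he1 he2]
          exact h2
  have hne : ∀ j < m, (ab j).1 ≠ i + 1 ∧ (ab j).2 ≠ i + 1 := by
    intro j hj
    constructor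
    · intro he1
      have h3 := hcov j hj
      have h4 := hvalbd j (by omega) (ab j).2
      have h5 := (hbound j hj).2
      rw [he1, hfix1 j (by omega)] at h3
      omega
    · intro he2
      have h2 := hfix1 (j + 1) (by omega)
      rw [← he2] at h2
      have h3 : vs (j + 1) (ab j).2 = vs j (ab j).1 := by
        rw [(hstep j hj).2.2.1]
        simp only [Equiv.Perm.mul_apply, Equiv.swap_apply_right]
      have h4 := hfix1 j hj.le
      rw [← he2] at h4
      have h5 := hcov j hj
      omega
  -- the downstairs chain
  have hus : ∀ j ≤ m, vs j * (eperm i n)⁻¹ * eperm i n = vs j := by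
    intro j _
    group
  have husInS : ∀ j ≤ m, InS a n (vs j * (eperm i n)⁻¹) := by
    intro j hj x hx
    by_contra hc
    push_neg at hc
    apply hx
    have hinv : ((eperm i n)⁻¹ : Equiv.Perm ℤ) x = (eperm i n).symm x := rfl
    simp only [Equiv.Perm.mul_apply, hinv]
    rcases lt_or_ge x a with h1 | h1
    · rw [eperm_symm_low (by omega), InS_fixes (hSj j hj) x (by omega)]
    · have h2 : n < x := by
        by_contra h3
        push_neg at h3
        exact absurd (hc h1) (by omega)
      rcases eq_or_lt_of_le (show n + 1 ≤ x by omega) with h3 | h3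
      · rw [← h3, eperm_symm_n1 (by omega), hfix1 j hj, h3]
      · rw [eperm_symm_high h3, InS_fixes (hSj j hj) x (by omega)]
  refine ⟨m, fun j => vs j * (eperm i n)⁻¹,
    fun j => (eperm i n (ab j).1, eperm i n (ab j).2),
    by show vs 0 * (eperm i n)⁻¹ = u; rw [h0]; group,
    by show vs m * (eperm i n)⁻¹ = w; rw [hm]; group, ?_, ?_⟩
  · intro j hj
    dsimp only
    obtain ⟨hp, hq, heq, hlen⟩ := hstep j hj
    obtain ⟨hpa, hqN⟩ := hbound j hj
    obtain ⟨hne1, hne2⟩ := hne j hj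
    refine ⟨?_, ?_, ?_, ?_⟩
    · rcases hcase with ⟨hik, rfl⟩ | ⟨hki, rfl⟩
      · rcases le_or_gt (ab j).1 i with h1 | h1
        · rw [eperm_low h1]; omega
        · rw [eperm_mid (by omega) (by omega)]; omega
      · rw [eperm_low (by omega)]
        exact hp
    · rcases hcase with ⟨hik, rfl⟩ | ⟨hki, rfl⟩
      · rw [eperm_mid (by omega) (by omega)]; omega
      · rcases le_or_gt (ab j).2 i with h1 | h1
        · rw [eperm_low h1]; omega
        · rw [eperm_mid (by omega) (by omega)]; omega
    · rw [heq, Equiv.swap_apply_apply (eperm i n) (ab j).1 (ab j).2]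
      group
    · have e1 : permLength (vs (j + 1) * (eperm i n)⁻¹ * eperm i n) =
          permLength (vs (j + 1) * (eperm i n)⁻¹) + (n - i).toNat :=
        len_mul_eperm (husInS (j + 1) (by omega)) hai hin
      have e2 : permLength (vs j * (eperm i n)⁻¹ * eperm i n) =
          permLength (vs j * (eperm i n)⁻¹) + (n - i).toNat :=
        len_mul_eperm (husInS j (by omega)) hai hin
      rw [hus (j + 1) (by omega)] at e1
      rw [hus j (by omega)] at e2
      omega
  · intro j j' hjj' hj'm
    dsimp only
    have h2 := hinc j j' hjj' hj'm
    have hinv : ∀ (j₀ : ℕ) (x : ℤ),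
        (vs j₀ * (eperm i n)⁻¹) (eperm i n x) = vs j₀ x := by
      intro j₀ x
      simp only [Equiv.Perm.mul_apply]
      congr 1
      exact (eperm i n).symm_apply_apply x
    rw [hinv, hinv]
    exact h2

end Transfer

end St10

open St10 in
theorem stmt10 (a n i k : ℤ) (hai : a ≤ i) (hin : i ≤ n - 1)
    (hak : a ≤ k) (hkn : k ≤ n - 1)
    (u w u' w' : Equiv.Perm ℤ) (hu : InS a n u) (hw : InS a n w)
    (hu' : InS a (n + 1) u') (hw' : InS a (n + 1) w')
    (hu'1 : ∀ t : ℤ, a ≤ t → t ≤ i → u' t = u t)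
    (hu'2 : u' (i + 1) = n + 1)
    (hu'3 : ∀ t : ℤ, i + 1 < t → t ≤ n + 1 → u' t = u (t - 1))
    (hw'1 : ∀ t : ℤ, a ≤ t → t ≤ i → w' t = w t)
    (hw'2 : w' (i + 1) = n + 1)
    (hw'3 : ∀ t : ℤ, i + 1 < t → t ≤ n + 1 → w' t = w (t - 1)) :
    (i ≤ k → ((IncTo k u w ↔ IncTo (k + 1) u' w') ∧
        fixSet k n u w = fixSet (k + 1) (n + 1) u' w')) ∧
    (k ≤ i → ((IncTo k u w ↔ IncTo k u' w') ∧
        fixSet k n u w ∪ {n + 1} = fixSet k (n + 1) u' w')) := by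
  have huE : u' = u * eperm i n := by
    apply Equiv.ext
    intro t
    simp only [Equiv.Perm.mul_apply]
    rcases lt_or_ge t a with h1 | h1
    · rw [eperm_low (by omega), InS_fixes hu' t (by omega), InS_fixes hu t (by omega)]
    · rcases le_or_gt t i with h2 | h2
      · rw [eperm_low h2, hu'1 t h1 h2]
      · rcases eq_or_lt_of_le (show i + 1 ≤ t by omega) with h3 | h3
        · rw [← h3, eperm_i1 (by omega), hu'2, InS_fixes hu (n + 1) (by omega)]
        · rcases le_or_gt t (n + 1) with h4 | h4
          · rw [eperm_mid (by omega) h4, hu'3 t h3 h4]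
          · rw [eperm_high h4, InS_fixes hu' t (by omega), InS_fixes hu t (by omega)]
  have hwE : w' = w * eperm i n := by
    apply Equiv.ext
    intro t
    simp only [Equiv.Perm.mul_apply]
    rcases lt_or_ge t a with h1 | h1
    · rw [eperm_low (by omega), InS_fixes hw' t (by omega), InS_fixes hw t (by omega)]
    · rcases le_or_gt t i with h2 | h2
      · rw [eperm_low h2, hw'1 t h1 h2]
      · rcases eq_or_lt_of_le (show i + 1 ≤ t by omega) with h3 | h3
        · rw [← h3, eperm_i1 (by omega), hw'2, InS_fixes hw (n + 1) (by omega)]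
        · rcases le_or_gt t (n + 1) with h4 | h4
          · rw [eperm_mid (by omega) h4, hw'3 t h3 h4]
          · rw [eperm_high h4, InS_fixes hw' t (by omega), InS_fixes hw t (by omega)]
  constructor
  · intro hik
    constructor
    · constructor
      · intro h
        rw [huE, hwE]
        exact incto_fwd hai hin hak hkn (Or.inl ⟨hik, rfl⟩) hu hw h
      · intro h
        rw [huE, hwE] at h
        exact incto_bwd hai hin hak hkn (Or.inl ⟨hik, rfl⟩) hu hw h
    · ext x
      simp only [fixSet, Set.mem_setOf_eq]
      constructor
      · rintro ⟨t, h1, h2, h3, h4⟩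
        refine ⟨t + 1, by omega, by omega, ?_, ?_⟩
        · rw [hu'3 (t + 1) (by omega) (by omega), show t + 1 - 1 = t from by omega]
          exact h3
        · rw [hw'3 (t + 1) (by omega) (by omega), show t + 1 - 1 = t from by omega]
          exact h4
      · rintro ⟨t, h1, h2, h3, h4⟩
        refine ⟨t - 1, by omega, by omega, ?_, ?_⟩
        · rw [← hu'3 t (by omega) h2]
          exact h3
        · rw [← hw'3 t (by omega) h2]
          exact h4
  · intro hki
    constructor
    · constructor
      · intro h
        rw [huE, hwE]
        exact incto_fwd hai hin hak hkn (Or.inr ⟨hki, rfl⟩) hu hw h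
      · intro h
        rw [huE, hwE] at h
        exact incto_bwd hai hin hak hkn (Or.inr ⟨hki, rfl⟩) hu hw h
    · ext x
      simp only [fixSet, Set.mem_union, Set.mem_setOf_eq, Set.mem_singleton_iff]
      constructor
      · rintro (⟨t, h1, h2, h3, h4⟩ | rfl)
        · by_cases ht : t ≤ i
          · refine ⟨t, h1, by omega, ?_, ?_⟩
            · rw [hu'1 t (by omega) ht]; exact h3
            · rw [hw'1 t (by omega) ht]; exact h4
          · refine ⟨t + 1, by omega, by omega, ?_, ?_⟩
            · rw [hu'3 (t + 1) (by omega) (by omega), show t + 1 - 1 = t from by omega]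
              exact h3
            · rw [hw'3 (t + 1) (by omega) (by omega), show t + 1 - 1 = t from by omega]
              exact h4
        · exact ⟨i + 1, by omega, by omega, hu'2, hw'2⟩
      · rintro ⟨t, h1, h2, h3, h4⟩
        rcases lt_trichotomy t (i + 1) with h5 | h5 | h5
        · left
          refine ⟨t, h1, by omega, ?_, ?_⟩
          · rw [← hu'1 t (by omega) (by omega)]; exact h3
          · rw [← hw'1 t (by omega) (by omega)]; exact h4
        · right
          rw [← h3, h5]
          exact hu'2
        · left
          refine ⟨t - 1, by omega, by omega, ?_, ?_⟩
          · rw [← hu'3 t h5 h2]; exact h3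
          · rw [← hw'3 t h5 h2]; exact h4
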